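/- Let G̃ and H*_T(G̃, s) be as in the paper's Section 4 for a modular triple of type (C). For any f̃ ∈ H*_T(G̃, s), define g : S_n → ℂ[t_1,...,t_n] by the equation (t_{w(d+1)} − t_{w(d)})·g(w) = f̃(w) − f̃(°wτ) (the right side is divisible by t_{w(d+1)} − t_{w(d)}). Then g ∈ H*_T(G), i.e. g(w) ≡ g(w(i,j)) mod (t_{w(i)} − t_{w(j)}) for all j < i ≤ h(j) and w ∈ S_n. -/

import Mathlib

open MvPolynomial

/-- The GKM graph cohomology of `X(h)` (0-based conventions): maps
`f : Sₙ → ℂ[t₁,…,tₙ]` with `f(w) − f(w·(i,j))` divisible by `t_{w(i)} − t_{w(j)}`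
for all edges `{w, w(i,j)}`, `j < i ≤ h(j)`. -/
def HTX (n : ℕ) (h : Fin n → Fin n) :
    Set (Equiv.Perm (Fin n) → MvPolynomial (Fin n) ℂ) :=
  {f | ∀ (w : Equiv.Perm (Fin n)) (i j : Fin n), j < i → i ≤ h j →
    (X (w i) - X (w j)) ∣ (f w - f (w * Equiv.swap i j))}

/-- The graph cohomology of `°G`: vertices `°w` for `w ∈ Sₙ`, edges `{°w, °w(i,j)}`
for `j < i ≤ h₋(j)` together with `{°w, °w(d+1, d₀)}`, labeled `t_{w(i)} − t_{w(j)}`. -/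
def HToG (n : ℕ) (hm : Fin n → Fin n) (d₀ dp : Fin n) :
    Set (Equiv.Perm (Fin n) → MvPolynomial (Fin n) ℂ) :=
  {f | ∀ (w : Equiv.Perm (Fin n)) (i j : Fin n), j < i →
    (i ≤ hm j ∨ (i = dp ∧ j = d₀)) →
    (X (w i) - X (w j)) ∣ (f w - f (w * Equiv.swap i j))}

/-- The graph cohomology `H*_T(G̃, s)` of the labeled graph `G̃` with sign `s`:
vertices `Sₙ ⊔ °Sₙ` (`Sum.inl w = w`, `Sum.inr w = °w`), edges of `G = G_X(h)`,
edges of `°G`, edges `{w, °w}` labeled `t_{w(d+1)} − t_{w(d)}`, together with the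
4-gon condition `f(w) − f(°w) + f(wτ) − f(°wτ) ≡ 0 mod (t_{w(d+1)} − t_{w(d)})²`,
where `τ = (d, d+1)`. -/
def HTtilde (n : ℕ) (h hm : Fin n → Fin n) (d₀ d dp : Fin n) :
    Set (Equiv.Perm (Fin n) ⊕ Equiv.Perm (Fin n) → MvPolynomial (Fin n) ℂ) :=
  {f | (∀ (w : Equiv.Perm (Fin n)) (i j : Fin n), j < i → i ≤ h j →
          (X (w i) - X (w j)) ∣ (f (Sum.inl w) - f (Sum.inl (w * Equiv.swap i j)))) ∧
       (∀ (w : Equiv.Perm (Fin n)) (i j : Fin n), j < i →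
          (i ≤ hm j ∨ (i = dp ∧ j = d₀)) →
          (X (w i) - X (w j)) ∣ (f (Sum.inr w) - f (Sum.inr (w * Equiv.swap i j)))) ∧
       (∀ w : Equiv.Perm (Fin n),
          (X (w dp) - X (w d)) ∣ (f (Sum.inl w) - f (Sum.inr w))) ∧
       (∀ w : Equiv.Perm (Fin n),
          (X (w dp) - X (w d)) ^ 2 ∣
            (f (Sum.inl w) - f (Sum.inr w)
              + f (Sum.inl (w * Equiv.swap d dp)) - f (Sum.inr (w * Equiv.swap d dp))))}

/-- For `f̃ ∈ H*_T(G̃, s)`, the element `g` defined by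
`(t_{w(d+1)} − t_{w(d)})·g(w) = f̃(w) − f̃(°wτ)` lies in `H*_T(G)`. -/

lemma primeX {n : ℕ} (a : Fin n) : Prime (X a : MvPolynomial (Fin n) ℂ) := by
  have h1 : Prime (X (⟨a, rfl⟩ : ({a} : Set (Fin n))) : MvPolynomial ({a} : Set (Fin n)) ℂ) := by
    rw [← MulEquiv.prime_iff (MvPolynomial.renameEquiv ℂ ((Equiv.Set.singleton a : _ ≃ PUnit.{1}))).toMulEquiv]
    rw [← MulEquiv.prime_iff (MvPolynomial.pUnitAlgEquiv ℂ).toMulEquiv]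
    simpa using Polynomial.prime_X
  have := (MvPolynomial.prime_rename_iff ({a} : Set (Fin n))).2 h1
  simpa using this

lemma primeXsubX {n : ℕ} {a b : Fin n} (hab : a ≠ b) :
    Prime (X a - X b : MvPolynomial (Fin n) ℂ) := by
  let u : Fin n → MvPolynomial (Fin n) ℂ := fun k => if k = a then X a - X b else X k
  let v : Fin n → MvPolynomial (Fin n) ℂ := fun k => if k = a then X a + X b else X k
  let e : MvPolynomial (Fin n) ℂ ≃ₐ[ℂ] MvPolynomial (Fin n) ℂ :=
    AlgEquiv.ofAlgHom (aeval u) (aeval v)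
      (by apply MvPolynomial.algHom_ext; intro k
          by_cases hk : k = a <;> simp [u, v, hk, hab.symm])
      (by apply MvPolynomial.algHom_ext; intro k
          by_cases hk : k = a <;> simp [u, v, hk, hab.symm])
  have : (X a - X b : MvPolynomial (Fin n) ℂ) = e (X a) := by
    simp [e, u, AlgEquiv.ofAlgHom]
  rw [this]
  exact (MulEquiv.prime_iff e).2 (primeX a)

lemma notdvdXsubX {n : ℕ} {a b c e : Fin n} (hab : a ≠ b) (hce : c ≠ e)
    (h1 : ¬(c = a ∧ e = b)) (h2 : ¬(c = b ∧ e = a)) :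
    ¬ (X a - X b : MvPolynomial (Fin n) ℂ) ∣ (X c - X e) := by
  intro hdvd
  set F : Fin n → MvPolynomial (Fin n) ℂ := Function.update X a (X b) with hF
  have := (aeval F).toRingHom.map_dvd hdvd
  change aeval F (X a - X b) ∣ aeval F (X c - X e) at this
  have hFa : F a = X b := Function.update_self _ _ _
  have hFo : ∀ k, k ≠ a → F k = X k := fun k hk => Function.update_of_ne hk _ _
  simp only [AlgHom.toRingHom_eq_coe, RingHom.coe_coe, map_sub, aeval_X, hFa,
    hFo b hab.symm, sub_self, zero_dvd_iff, sub_eq_zero] at this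
  have hne : F c ≠ F e := by
    by_cases hc : c = a
    · rw [hc, hFa, hFo e (fun he => hce (hc.trans he.symm))]
      exact fun hh => h1 ⟨hc, (MvPolynomial.X_injective hh).symm⟩
    · rw [hFo c hc]
      by_cases he : e = a
      · rw [he, hFa]
        exact fun hh => h2 ⟨MvPolynomial.X_injective hh, he⟩
      · rw [hFo e he]
        exact MvPolynomial.X_injective.ne hce
  exact hne this

theorem quotient_g_mem_HTX (n : ℕ) (h hm hp : Fin n → Fin n) (d₀ d dp dm : Fin n)
    (hmono : Monotone h) (hle : ∀ j, j ≤ h j)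
    (hd₀d : d₀ < d) (hdp : (dp : ℕ) = (d : ℕ) + 1) (hdm : (dm : ℕ) + 1 = (d : ℕ))
    (hcol : h d = h dp) (hinv : ∀ j, h j = d ↔ j = d₀)
    (hhm : hm = Function.update h d₀ dm) (hhp : hp = Function.update h d₀ dp)
    (ft : Equiv.Perm (Fin n) ⊕ Equiv.Perm (Fin n) → MvPolynomial (Fin n) ℂ)
    (hft : ft ∈ HTtilde n h hm d₀ d dp)
    (g : Equiv.Perm (Fin n) → MvPolynomial (Fin n) ℂ)
    (hg : ∀ w : Equiv.Perm (Fin n),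
      (X (w dp) - X (w d)) * g w = ft (Sum.inl w) - ft (Sum.inr (w * Equiv.swap d dp))) :
    g ∈ HTX n h := by
  simp only [HTtilde, Set.mem_setOf_eq] at hft
  obtain ⟨hG, hoG, hedge, h4gon⟩ := hft
  simp only [HTX, Set.mem_setOf_eq]
  intro w i j hji hij
  have hddp : d < dp := by rw [Fin.lt_def]; omega
  have hd₀dp : d₀ < dp := hd₀d.trans hddp
  have hhd₀ : h d₀ = d := (hinv d₀).mpr rfl
  have hmval : ∀ k, k ≠ d₀ → hm k = h k := fun k hk => by
    rw [hhm]; exact Function.update_of_ne hk _ _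
  have hmd₀ : hm d₀ = dm := by rw [hhm]; exact Function.update_self _ _ _
  set τ : Equiv.Perm (Fin n) := Equiv.swap d dp with hτdef
  by_cases hcase : i = dp ∧ j = d
  · -- the edge is τ itself
    obtain ⟨hi, hj⟩ := hcase
    rw [hi, hj, Equiv.swap_comm dp d]
    have hα : (X (w dp) - X (w d) : MvPolynomial (Fin n) ℂ) ≠ 0 := by
      rw [sub_ne_zero]
      exact MvPolynomial.X_injective.ne (w.injective.ne hddp.ne')
    have e1 := hg w
    have e2 := hg (w * τ)
    have hwτdp : (w * τ) dp = w d := by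
      rw [Equiv.Perm.mul_apply, hτdef, Equiv.swap_apply_right]
    have hwτd : (w * τ) d = w dp := by
      rw [Equiv.Perm.mul_apply, hτdef, Equiv.swap_apply_left]
    have hwττ : w * τ * τ = w := by
      rw [mul_assoc, hτdef, Equiv.swap_mul_self, mul_one]
    rw [hwτdp, hwτd, hwττ] at e2
    have hkey : (X (w dp) - X (w d)) * ((X (w dp) - X (w d)) * (g w - g (w * τ))) =
        (X (w dp) - X (w d)) ^ 2 *
          (g w - g (w * τ)) := by ring
    have hsq := h4gon w
    have hdvd2 : (X (w dp) - X (w d)) * (X (w dp) - X (w d)) ∣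
        (X (w dp) - X (w d)) * (g w - g (w * τ)) := by
      have heq : (X (w dp) - X (w d)) * (g w - g (w * τ)) =
          ft (Sum.inl w) - ft (Sum.inr w) + ft (Sum.inl (w * Equiv.swap d dp))
            - ft (Sum.inr (w * Equiv.swap d dp)) := by
        linear_combination e1 + e2
      rw [heq, ← pow_two]
      exact hsq
    exact (mul_dvd_mul_iff_left hα).mp hdvd2
  · -- the edge is not τ
    set σ : Equiv.Perm (Fin n) := Equiv.swap i j with hσdef
    set β : MvPolynomial (Fin n) ℂ := X (w i) - X (w j) with hβdef
    have hwij : w i ≠ w j := w.injective.ne hji.ne'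
    have hβprime : Prime β := primeXsubX hwij
    have hβnotdvd : ¬ β ∣ (X (w dp) - X (w d)) := by
      apply notdvdXsubX hwij (w.injective.ne hddp.ne')
      · rintro ⟨h1, h2⟩
        exact hcase ⟨(w.injective h1).symm, (w.injective h2).symm⟩
      · rintro ⟨h1, h2⟩
        have e1 : dp = j := w.injective h1
        have e2 : d = i := w.injective h2
        rw [← e1, ← e2] at hji
        exact lt_asymm hddp hji
    -- facts about d₀
    have hd₀d' : d₀ ≠ d := hd₀d.ne
    have hd₀dp' : d₀ ≠ dp := hd₀dp.ne
    -- the combinatorial case analysis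
    have big : (τ j < τ i ∧ (τ i ≤ hm (τ j) ∨ (τ i = dp ∧ τ j = d₀))) ∧
        β ∣ ((X (w dp) - X (w d)) - (X ((w * σ) dp) - X ((w * σ) d))) := by
      have hσd : ∀ x, (w * σ) x = w (σ x) := fun x => Equiv.Perm.mul_apply w σ x
      by_cases hid : i = d
      · -- i = d, j < d
        subst hid
        have hjne_d : j ≠ i := hji.ne
        have hjne_dp : j ≠ dp := (hji.trans hddp).ne
        have hτi : τ i = dp := Equiv.swap_apply_left _ _
        have hτj : τ j = j := Equiv.swap_apply_of_ne_of_ne hjne_d hjne_dp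
        have hσi : σ i = j := Equiv.swap_apply_left _ _
        have hσdp : σ dp = dp := Equiv.swap_apply_of_ne_of_ne hddp.ne' hjne_dp.symm
        refine ⟨⟨?_, ?_⟩, ?_⟩
        · rw [hτi, hτj]; exact hji.trans hddp
        · rw [hτi, hτj]
          by_cases hjd₀ : j = d₀
          · exact Or.inr ⟨rfl, hjd₀⟩
          · left
            rw [hmval j hjd₀, Fin.le_def, hdp]
            have h1 : (i : ℕ) ≤ (h j : ℕ) := hij
            have h2 : (h j : ℕ) ≠ (i : ℕ) := fun hh => hjd₀ ((hinv j).mp (Fin.ext hh))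
            omega
        · rw [hσd, hσd, hσi, hσdp]
          exact ⟨-1, by ring⟩
      · by_cases hidp : i = dp
        · -- i = dp, j < d
          subst hidp
          have hjne_d : j ≠ d := fun hh => hcase ⟨rfl, hh⟩
          have hjltd : j < d := by
            have h1 : (j : ℕ) < (i : ℕ) := hji
            have h2 : (j : ℕ) ≠ (d : ℕ) := fun hh => hjne_d (Fin.ext hh)
            rw [Fin.lt_def]; omega
          have hjd₀ : j ≠ d₀ := by
            intro hh
            rw [hh, hhd₀] at hij
            exact absurd hij (not_le.mpr hddp)
          have hτi : τ i = d := Equiv.swap_apply_right _ _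
          have hτj : τ j = j := Equiv.swap_apply_of_ne_of_ne hjne_d (hjltd.trans hddp).ne
          have hσi : σ i = j := Equiv.swap_apply_left _ _
          have hσdd : σ d = d := Equiv.swap_apply_of_ne_of_ne hddp.ne hjne_d.symm
          refine ⟨⟨?_, ?_⟩, ?_⟩
          · rw [hτi, hτj]; exact hjltd
          · rw [hτi, hτj]
            left
            rw [hmval j hjd₀]
            exact (hddp.trans_le hij).le
          · rw [hσd, hσd, hσi, hσdd]
            exact ⟨1, by ring⟩
        · by_cases hjd : j = d
          · -- j = d, dp < i
            subst hjd
            have hdpi : dp < i := by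
              have h1 : (j : ℕ) < (i : ℕ) := hji
              have h2 : (i : ℕ) ≠ (dp : ℕ) := fun hh => hidp (Fin.ext hh)
              rw [Fin.lt_def]; omega
            have hτi : τ i = i := Equiv.swap_apply_of_ne_of_ne hid hidp
            have hτj : τ j = dp := Equiv.swap_apply_left _ _
            have hσj : σ j = i := Equiv.swap_apply_right _ _
            have hσdp : σ dp = dp := Equiv.swap_apply_of_ne_of_ne (fun hh => hidp hh.symm) hddp.ne'
            refine ⟨⟨?_, ?_⟩, ?_⟩
            · rw [hτi, hτj]; exact hdpi
            · rw [hτi, hτj]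
              left
              rw [hmval dp hd₀dp'.symm, ← hcol]
              exact hij
            · rw [hσd, hσd, hσj, hσdp]
              exact ⟨1, by ring⟩
          · by_cases hjdp : j = dp
            · -- j = dp, dp < i
              subst hjdp
              have hdi : d < i := hddp.trans hji
              have hτi : τ i = i := Equiv.swap_apply_of_ne_of_ne hid hidp
              have hτj : τ j = d := Equiv.swap_apply_right _ _
              have hσj : σ j = i := Equiv.swap_apply_right _ _
              have hσdd : σ d = d := Equiv.swap_apply_of_ne_of_ne (fun hh => hid hh.symm) hddp.ne
              refine ⟨⟨?_, ?_⟩, ?_⟩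
              · rw [hτi, hτj]; exact hdi
              · rw [hτi, hτj]
                left
                rw [hmval d hd₀d'.symm, hcol]
                exact hij
              · rw [hσd, hσd, hσj, hσdd]
                exact ⟨-1, by ring⟩
            · -- generic case
              have hτi : τ i = i := Equiv.swap_apply_of_ne_of_ne hid hidp
              have hτj : τ j = j := Equiv.swap_apply_of_ne_of_ne hjd hjdp
              have hσdd : σ d = d :=
                Equiv.swap_apply_of_ne_of_ne (fun hh => hid hh.symm) (fun hh => hjd hh.symm)
              have hσdp : σ dp = dp :=
                Equiv.swap_apply_of_ne_of_ne (fun hh => hidp hh.symm) (fun hh => hjdp hh.symm)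
              refine ⟨⟨?_, ?_⟩, ?_⟩
              · rw [hτi, hτj]; exact hji
              · rw [hτi, hτj]
                by_cases hjd₀ : j = d₀
                · left
                  subst hjd₀
                  rw [hmd₀, Fin.le_def]
                  have h1 : (i : ℕ) ≤ (h j : ℕ) := hij
                  have h2 : (h j : ℕ) = (d : ℕ) := by rw [hhd₀]
                  have h3 : (i : ℕ) ≠ (d : ℕ) := fun hh => hid (Fin.ext hh)
                  omega
                · left
                  rw [hmval j hjd₀]
                  exact hij
              · rw [hσd, hσd, hσdd, hσdp]
                exact ⟨0, by ring⟩
    obtain ⟨⟨hord, hcond⟩, h3⟩ := big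
    have h1 : β ∣ ft (Sum.inl w) - ft (Sum.inl (w * σ)) := hG w i j hji hij
    have h2' := hoG (w * τ) (τ i) (τ j) hord hcond
    have happ : ∀ x, (w * τ) (τ x) = w x := fun x => by
      rw [Equiv.Perm.mul_apply, hτdef, Equiv.swap_apply_self]
    have hperm : (w * τ) * Equiv.swap (τ i) (τ j) = w * σ * τ := by
      rw [Equiv.swap_apply_apply τ i j]
      have : τ⁻¹ = τ := by rw [hτdef]; exact Equiv.swap_inv _ _
      rw [this]
      rw [show w * τ * (τ * σ * τ) = w * (τ * τ) * σ * τ by group]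
      rw [hτdef, Equiv.swap_mul_self, mul_one]
    rw [happ i, happ j, hperm] at h2'
    have hkey : (X (w dp) - X (w d)) * (g w - g (w * σ)) =
        (ft (Sum.inl w) - ft (Sum.inl (w * σ)))
          - (ft (Sum.inr (w * τ)) - ft (Sum.inr (w * σ * τ)))
          - ((X (w dp) - X (w d)) - (X ((w * σ) dp) - X ((w * σ) d))) * g (w * σ) := by
      linear_combination hg w - hg (w * σ)
    have hdvd : β ∣ (X (w dp) - X (w d)) * (g w - g (w * σ)) := by
      rw [hkey]
      exact dvd_sub (dvd_sub h1 h2') (h3.mul_right _)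
    exact (hβprime.2.2 _ _ hdvd).resolve_left hβnotdvd
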